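/- For all a, b, c with |a| = |b| = |c| = 1 (and all quantities defined), the hypergeometric function satisfies the identity F(T_1(a),T_1(b);T_1(c); (ab/c)·t)^q − x·F(a,b;c;t) = −F(a,b;c;xt) wherever all three series converge; as formal identities of the coefficients of t^{q^n}, this amounts to: ⟨T_1(a)⟩_{n−1}^q⟨T_1(b)⟩_{n−1}^q / (⟨T_1(c)⟩_{n−1}^q D_{n−1}^q) · (ab/c)^{q^n} = −[n]·⟨a⟩_n⟨b⟩_n/(⟨c⟩_n D_n) for n ≥ 1. -/

import Mathlib

/-- the hypergeometric identity
`F(T_1(a),T_1(b);T_1(c);(ab/c)t)^q - x F(a,b;c;t) = -F(a,b;c;xt)` holds at the level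
of coefficients of `t^{q^n}`: for `n ≥ 1`,
`⟨T_1(a)⟩_{n-1}^q ⟨T_1(b)⟩_{n-1}^q / (⟨T_1(c)⟩_{n-1}^q D_{n-1}^q) · (ab/c)^{q^n}
  = -[n] · ⟨a⟩_n⟨b⟩_n/(⟨c⟩_n D_n)`,
where `T_1(a)^q = a - [1]`, etc., and `c`, all `⟨c⟩_n` and `⟨T_1(c)⟩_n` are nonzero. -/
theorem hypergeometric_frobenius_identity {C : Type*} [NormedField C]
    (hna : IsNonarchimedean (‖·‖ : C → ℝ))
    (q : ℕ) (p m : ℕ) (hp : p.Prime) (hm : 0 < m) (hqpm : q = p ^ m) (hq : 1 < q)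
    [CharP C p]
    (x : C) (hx : ‖x‖ = (q : ℝ)⁻¹)
    (D : ℕ → C) (hD0 : D 0 = 1)
    (hD : ∀ n : ℕ, D (n + 1) = (x ^ q ^ (n + 1) - x) * (D n) ^ q)
    (P : C → ℕ → C)
    (hP : ∀ a : C, ∀ n : ℕ,
      P a n = ∏ i ∈ Finset.range n, ((x ^ q ^ i - x) - a) ^ q ^ (n - i))
    (a b c Ta Tb Tc : C)
    (ha : ‖a‖ = 1) (hb : ‖b‖ = 1) (hc : ‖c‖ = 1)
    (hTa : Ta ^ q = a - (x ^ q - x)) (hTb : Tb ^ q = b - (x ^ q - x))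
    (hTc : Tc ^ q = c - (x ^ q - x))
    (hc0 : c ≠ 0) (hPc : ∀ n : ℕ, P c n ≠ 0) (hPTc : ∀ n : ℕ, P Tc n ≠ 0) :
    ∀ n : ℕ, 1 ≤ n →
      (P Ta (n - 1)) ^ q * (P Tb (n - 1)) ^ q / ((P Tc (n - 1)) ^ q * (D (n - 1)) ^ q) *
          (a * b / c) ^ q ^ n =
        -(x ^ q ^ n - x) * (P a n * P b n / (P c n * D n)) := by
  haveI := Fact.mk hp
  have hfrob : ∀ u v : C, (u - v) ^ q = u ^ q - v ^ q := by
    intro u v; rw [hqpm]; exact sub_pow_char_pow u v m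
  have hnegpow : ∀ (u : C) (k : ℕ), (-u) ^ q ^ k = -(u ^ q ^ k) := by
    intro u k
    rw [neg_eq_neg_one_mul, mul_pow, hqpm, ← pow_mul, neg_one_pow_char_pow C, neg_one_mul]
  have hkey : ∀ (u Tu : C), Tu ^ q = u - (x ^ q - x) → ∀ k : ℕ,
      P u (k + 1) = -(u ^ q ^ (k + 1)) * (P Tu k) ^ q := by
    intro u Tu hTu k
    rw [hP, hP, Finset.prod_range_succ']
    have h0 : ((x ^ q ^ 0 - x) - u) ^ q ^ (k + 1 - 0) = -(u ^ q ^ (k + 1)) := by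
      rw [pow_zero, pow_one, sub_self, zero_sub, Nat.sub_zero, hnegpow]
    have hfac : ∀ i ∈ Finset.range k,
        ((x ^ q ^ (i + 1) - x) - u) ^ q ^ (k + 1 - (i + 1)) =
          (((x ^ q ^ i - x) - Tu) ^ q ^ (k - i)) ^ q := by
      intro i hi
      have h1 : ((x ^ q ^ i - x) - Tu) ^ q = (x ^ q ^ (i + 1) - x) - u := by
        rw [hfrob, hfrob, hTu, ← pow_mul, ← pow_succ]
        ring
      have hk : k + 1 - (i + 1) = k - i := by omega
      rw [hk, ← h1, ← pow_mul, ← pow_mul, mul_comm]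
    rw [Finset.prod_congr rfl hfac, Finset.prod_pow, ← hP, h0]
    ring
  have hq0 : (0:ℝ) < (q : ℝ)⁻¹ := by
    have : (0:ℝ) < (q : ℝ) := by exact_mod_cast Nat.lt_of_lt_of_le Nat.zero_lt_one hq.le
    positivity
  have hbr : ∀ k : ℕ, x ^ q ^ (k + 1) - x ≠ 0 := by
    intro k h
    have hxx : x ^ q ^ (k + 1) = x := by rwa [sub_eq_zero] at h
    have hn : ‖x‖ ^ q ^ (k + 1) = ‖x‖ := by rw [← norm_pow, hxx]
    rw [hx] at hn
    have h1 : ((q:ℝ)⁻¹) ^ q ^ (k + 1) < ((q:ℝ)⁻¹) ^ 1 := by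
      apply pow_lt_pow_right_of_lt_one₀ hq0
      · exact inv_lt_one_of_one_lt₀ (by exact_mod_cast hq)
      · exact Nat.one_lt_pow (Nat.succ_ne_zero k) hq
    rw [pow_one, hn] at h1
    exact lt_irrefl _ h1
  have hDne : ∀ k : ℕ, D k ≠ 0 := by
    intro k
    induction k with
    | zero => rw [hD0]; exact one_ne_zero
    | succ n ih => rw [hD n]; exact mul_ne_zero (hbr n) (pow_ne_zero _ ih)
  intro n hn
  obtain ⟨k, rfl⟩ : ∃ k, n = k + 1 := ⟨n - 1, (Nat.succ_pred_eq_of_pos hn).symm⟩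
  simp only [Nat.add_sub_cancel]
  rw [hkey a Ta hTa k, hkey b Tb hTb k, hkey c Tc hTc k, hD k]
  have hPc' : (P Tc k) ^ q ≠ 0 := pow_ne_zero _ (hPTc k)
  have hD' : (D k) ^ q ≠ 0 := pow_ne_zero _ (hDne k)
  have hbr' := hbr k
  have hcq : c ^ q ^ (k + 1) ≠ 0 := pow_ne_zero _ hc0
  field_simp
  ring_nf
  rw [mul_assoc _ (c ^ (q * q ^ k)), ← mul_pow c c⁻¹, mul_inv_cancel₀ hc0, one_pow, mul_one]
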